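/- Let A ∈ S^n_{++} with simple largest and smallest eigenvalues λ₁ > λ₂ ≥ ⋯ ≥ λ_{n−1} > λ_n > 0 and corresponding orthonormal eigenvectors x₁, x_n. Suppose there exists nonzero w ∈ ℝ^n with Diag(w)x₁ = 0 and Diag(w)x_n = 0 (i.e., w ∘ x₁ = w ∘ x_n = 0). Then there exists ε > 0 such that for all |t| ≤ ε, κ((I + t·Diag(w)) A (I + t·Diag(w))) = κ(A). -/

import Mathlib

open Matrix

open Polynomial



open Matrix Polynomial

lemma charpoly_diagonal_real {n : ℕ} (d : Fin n → ℝ) :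
    (Matrix.diagonal d).charpoly = ∏ i, (X - C (d i)) := by
  have h : charmatrix (Matrix.diagonal d) = Matrix.diagonal (fun i => (X : ℝ[X]) - C (d i)) := by
    ext i j
    by_cases h : i = j
    · subst h; simp [charmatrix_apply_eq, Matrix.diagonal_apply_eq]
    · rw [charmatrix_apply_ne _ _ _ h, Matrix.diagonal_apply_ne _ h,
        Matrix.diagonal_apply_ne _ h, map_zero, neg_zero]
  rw [Matrix.charpoly, h, Matrix.det_diagonal]

lemma charpoly_eq_prod_eigenvalues {n : ℕ} {A : Matrix (Fin n) (Fin n) ℝ} (hH : A.IsHermitian) :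
    A.charpoly = ∏ i, (X - C (hH.eigenvalues i)) := by
  have hb : LinearMap.toMatrix hH.eigenvectorBasis.toBasis hH.eigenvectorBasis.toBasis
      (Matrix.toEuclideanLin A) = Matrix.diagonal hH.eigenvalues := by
    ext i j
    rw [LinearMap.toMatrix_apply]
    have h1 : Matrix.toEuclideanLin A (hH.eigenvectorBasis.toBasis j)
        = hH.eigenvalues j • hH.eigenvectorBasis.toBasis j := by
      apply PiLp.ext
      intro k
      have := congrFun (hH.mulVec_eigenvectorBasis j) k
      simpa [Matrix.toEuclideanLin_apply] using this
    rw [h1, _root_.map_smul, Module.Basis.repr_self]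
    simp [Matrix.diagonal_apply, Finsupp.single_apply, eq_comm]
    by_cases h : i = j <;> simp [h]
  have h2 : A.charpoly = (Matrix.toEuclideanLin A).charpoly := by
    rw [← LinearMap.charpoly_toMatrix (Matrix.toEuclideanLin A) (PiLp.basisFun 2 ℝ (Fin n))]
    congr 1
    rw [Matrix.toEuclideanLin_eq_toLin, LinearMap.toMatrix_toLin]
  rw [h2, ← LinearMap.charpoly_toMatrix (Matrix.toEuclideanLin A) hH.eigenvectorBasis.toBasis,
    hb, charpoly_diagonal_real]

lemma eigen_card {n : ℕ} {A : Matrix (Fin n) (Fin n) ℝ} (hH : A.IsHermitian) (lam : ℝ)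
    (h : A.charpoly.rootMultiplicity lam = 1) :
    (Finset.univ.filter (fun i => hH.eigenvalues i = lam)).card = 1 := by
  have h0 : A.charpoly.roots = Finset.univ.val.map hH.eigenvalues := by
    rw [charpoly_eq_prod_eigenvalues hH, Finset.prod_eq_multiset_prod]
    have hmm : Multiset.map (fun i => X - C (hH.eigenvalues i)) Finset.univ.val
        = Multiset.map (fun a : ℝ => X - C a) (Multiset.map hH.eigenvalues Finset.univ.val) := by
      rw [Multiset.map_map]; rfl
    rw [hmm, Polynomial.roots_multiset_prod_X_sub_C]
  have h1 : A.charpoly.roots.count lam = 1 := by rw [Polynomial.count_roots, h]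
  rw [h0, Multiset.count_map] at h1
  rw [Finset.card_def, Finset.filter_val, ← h1]
  exact congrArg Multiset.card (Multiset.filter_congr (fun x _ => by simp [eq_comm]))

lemma mem_spectrum_iff_eigen {n : ℕ} (B : Matrix (Fin n) (Fin n) ℝ) (μ : ℝ) :
    μ ∈ spectrum ℝ B ↔ ∃ v : Fin n → ℝ, v ≠ 0 ∧ B.mulVec v = μ • v := by
  rw [← AlgEquiv.spectrum_eq (Matrix.toLinAlgEquiv' (R := ℝ) (n := Fin n)),
    ← Module.End.hasEigenvalue_iff_mem_spectrum]
  constructor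
  · intro h
    obtain ⟨v, hv⟩ := h.exists_hasEigenvector
    exact ⟨v, hv.2, by simpa [Matrix.toLinAlgEquiv'_apply] using hv.apply_eq_smul⟩
  · rintro ⟨v, hv0, hv⟩
    exact Module.End.hasEigenvalue_of_hasEigenvector
      ⟨Module.End.mem_eigenspace_iff.mpr (by simpa [Matrix.toLinAlgEquiv'_apply] using hv), hv0⟩

lemma dotProduct_self_pos' {n : ℕ} {v : Fin n → ℝ} (hv : v ≠ 0) : 0 < v ⬝ᵥ v := by
  have h0 : (0:ℝ) ≤ v ⬝ᵥ v := Finset.sum_nonneg fun i _ => mul_self_nonneg (v i)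
  rcases h0.lt_or_eq with h | h
  · exact h
  · exact absurd (dotProduct_self_eq_zero.mp h.symm) hv

lemma sSup_spectrum_eq_of {n : ℕ} {B : Matrix (Fin n) (Fin n) ℝ} {lam : ℝ}
    (hmem : lam ∈ spectrum ℝ B)
    (hle : ∀ x : Fin n → ℝ, (B.mulVec x) ⬝ᵥ x ≤ lam * (x ⬝ᵥ x)) :
    sSup (spectrum ℝ B) = lam := by
  refine IsGreatest.csSup_eq ⟨hmem, ?_⟩
  intro μ hμ
  obtain ⟨v, hv0, hv⟩ := (mem_spectrum_iff_eigen B μ).1 hμ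
  have hvv := dotProduct_self_pos' hv0
  have := hle v
  rw [hv, smul_dotProduct] at this
  exact le_of_mul_le_mul_right (by simpa using this) hvv

lemma sInf_spectrum_eq_of {n : ℕ} {B : Matrix (Fin n) (Fin n) ℝ} {lam : ℝ}
    (hmem : lam ∈ spectrum ℝ B)
    (hle : ∀ x : Fin n → ℝ, lam * (x ⬝ᵥ x) ≤ (B.mulVec x) ⬝ᵥ x) :
    sInf (spectrum ℝ B) = lam := by
  refine IsLeast.csInf_eq ⟨hmem, ?_⟩
  intro μ hμ
  obtain ⟨v, hv0, hv⟩ := (mem_spectrum_iff_eigen B μ).1 hμ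
  have hvv := dotProduct_self_pos' hv0
  have := hle v
  rw [hv, smul_dotProduct] at this
  exact le_of_mul_le_mul_right (by simpa using this) hvv


section
variable {n : ℕ} {A : Matrix (Fin n) (Fin n) ℝ} (hH : A.IsHermitian)

/-- coefficients of a vector in the eigenbasis -/
noncomputable def ecoeff (v : Fin n → ℝ) : Fin n → ℝ :=
  fun j => hH.eigenvectorBasis.repr ((WithLp.equiv 2 (Fin n → ℝ)).symm v) j

lemma ecoeff_dot (v v' : Fin n → ℝ) : v ⬝ᵥ v' = ∑ j, ecoeff hH v j * ecoeff hH v' j := by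
  have h := hH.eigenvectorBasis.repr.inner_map_map
    ((WithLp.equiv 2 (Fin n → ℝ)).symm v) ((WithLp.equiv 2 (Fin n → ℝ)).symm v')
  simp only [PiLp.inner_apply, RCLike.inner_apply, conj_trivial] at h
  unfold ecoeff
  conv_rhs => arg 2; ext j; rw [mul_comm]
  rw [h, dotProduct_comm]
  rfl

lemma ecoeff_mulVec (v : Fin n → ℝ) (j : Fin n) :
    ecoeff hH (A *ᵥ v) j = hH.eigenvalues j * ecoeff hH v j := by
  have hsym : (Matrix.toEuclideanLin A).IsSymmetric :=
    (Matrix.isHermitian_iff_isSymmetric).mp hH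
  have hT : Matrix.toEuclideanLin A ((WithLp.equiv 2 (Fin n → ℝ)).symm v)
      = (WithLp.equiv 2 (Fin n → ℝ)).symm (A *ᵥ v) := by
    rw [Matrix.toEuclideanLin_apply]
    simp
  have hTb : Matrix.toEuclideanLin A (hH.eigenvectorBasis j)
      = hH.eigenvalues j • hH.eigenvectorBasis j := by
    apply PiLp.ext
    intro k
    have := congrFun (hH.mulVec_eigenvectorBasis j) k
    simpa [Matrix.toEuclideanLin_apply] using this
  unfold ecoeff
  rw [OrthonormalBasis.repr_apply_apply, OrthonormalBasis.repr_apply_apply,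
    ← hT, ← hsym (hH.eigenvectorBasis j) _, hTb, real_inner_smul_left]

lemma ecoeff_eq_zero_iff (v : Fin n → ℝ) : (∀ j, ecoeff hH v j = 0) ↔ v = 0 := by
  constructor
  · intro h
    have h1 : hH.eigenvectorBasis.repr ((WithLp.equiv 2 (Fin n → ℝ)).symm v) = 0 := by
      apply PiLp.ext; intro j; exact h j
    have h2 : (WithLp.equiv 2 (Fin n → ℝ)).symm v = 0 := by
      simpa using hH.eigenvectorBasis.repr.map_eq_zero_iff.mp h1
    simpa using congrArg (WithLp.equiv 2 (Fin n → ℝ)) h2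
  · intro h j
    subst h
    unfold ecoeff
    simp

lemma ecoeff_smul (a : ℝ) (v : Fin n → ℝ) (j : Fin n) :
    ecoeff hH (a • v) j = a * ecoeff hH v j := by
  unfold ecoeff
  rw [show (WithLp.equiv 2 (Fin n → ℝ)).symm (a • v) = a • (WithLp.equiv 2 (Fin n → ℝ)).symm v from rfl, _root_.map_smul]
  rfl

end

lemma rayleigh_bounds {n : ℕ} {A : Matrix (Fin n) (Fin n) ℝ} (hA : A.PosDef)
    {lam1 lamn : ℝ} {x1 xn : Fin n → ℝ}
    (hx1 : x1 ≠ 0) (hxn : xn ≠ 0)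
    (hup : ∀ i, hA.1.eigenvalues i ≤ lam1) (hlo : ∀ i, lamn ≤ hA.1.eigenvalues i)
    (heig1 : A.mulVec x1 = lam1 • x1) (heign : A.mulVec xn = lamn • xn)
    (hcard1 : (Finset.univ.filter (fun i => hA.1.eigenvalues i = lam1)).card = 1)
    (hcardn : (Finset.univ.filter (fun i => hA.1.eigenvalues i = lamn)).card = 1)
    (hne : lam1 ≠ lamn) :
    ∃ lam2 lamm : ℝ, lam2 < lam1 ∧ lamn < lamm ∧ 0 < lamm ∧ 0 < lam2 ∧
      ∀ u : Fin n → ℝ, x1 ⬝ᵥ u = 0 → xn ⬝ᵥ u = 0 →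
        lamm * (u ⬝ᵥ u) ≤ (A *ᵥ u) ⬝ᵥ u ∧ (A *ᵥ u) ⬝ᵥ u ≤ lam2 * (u ⬝ᵥ u) := by
  set hH := hA.1 with hHdef
  set μ := hH.eigenvalues with hμdef
  obtain ⟨i1, hi1⟩ := Finset.card_eq_one.mp hcard1
  have hμi1 : μ i1 = lam1 := by
    have h : i1 ∈ Finset.univ.filter (fun i => μ i = lam1) := by
      rw [hi1]; exact Finset.mem_singleton_self i1
    exact (Finset.mem_filter.mp h).2
  have huniq1 : ∀ j, μ j = lam1 → j = i1 := by
    intro j hj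
    have h : j ∈ Finset.univ.filter (fun i => μ i = lam1) := by
      simp [Finset.mem_filter, hj]
    rw [hi1] at h; exact Finset.mem_singleton.mp h
  obtain ⟨in', hin'⟩ := Finset.card_eq_one.mp hcardn
  have hμin : μ in' = lamn := by
    have h : in' ∈ Finset.univ.filter (fun i => μ i = lamn) := by
      rw [hin']; exact Finset.mem_singleton_self in'
    exact (Finset.mem_filter.mp h).2
  have huniqn : ∀ j, μ j = lamn → j = in' := by
    intro j hj
    have h : j ∈ Finset.univ.filter (fun i => μ i = lamn) := by
      simp [Finset.mem_filter, hj]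
    rw [hin'] at h; exact Finset.mem_singleton.mp h
  have hμpos : ∀ j, 0 < μ j := fun j => hA.eigenvalues_pos j
  have hlamn_pos : 0 < lamn := hμin ▸ hμpos in'
  have hlamn_le : lamn ≤ lam1 := by rw [← hμin]; exact hup in'
  have hlamn_lt : lamn < lam1 := lt_of_le_of_ne hlamn_le (Ne.symm hne)
  -- coefficients of eigenvectors
  have hc1 : ∀ j, j ≠ i1 → ecoeff hH x1 j = 0 := by
    intro j hj
    have h1 := ecoeff_mulVec hH x1 j
    rw [heig1, ecoeff_smul] at h1
    have hμj : μ j ≠ lam1 := fun h => hj (huniq1 j h)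
    have h2 : (μ j - lam1) * ecoeff hH x1 j = 0 := by ring_nf; linarith [h1]
    rcases mul_eq_zero.mp h2 with h | h
    · exact absurd (by linarith : μ j = lam1) hμj
    · exact h
  have hcn : ∀ j, j ≠ in' → ecoeff hH xn j = 0 := by
    intro j hj
    have h1 := ecoeff_mulVec hH xn j
    rw [heign, ecoeff_smul] at h1
    have hμj : μ j ≠ lamn := fun h => hj (huniqn j h)
    have h2 : (μ j - lamn) * ecoeff hH xn j = 0 := by ring_nf; linarith [h1]
    rcases mul_eq_zero.mp h2 with h | h
    · exact absurd (by linarith : μ j = lamn) hμj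
    · exact h
  have hc1i1 : ecoeff hH x1 i1 ≠ 0 := by
    intro h0
    apply hx1
    apply (ecoeff_eq_zero_iff hH x1).mp
    intro j
    by_cases hj : j = i1
    · rw [hj]; exact h0
    · exact hc1 j hj
  have hcnin : ecoeff hH xn in' ≠ 0 := by
    intro h0
    apply hxn
    apply (ecoeff_eq_zero_iff hH xn).mp
    intro j
    by_cases hj : j = in'
    · rw [hj]; exact h0
    · exact hcn j hj
  -- key reduction
  have key : ∀ lam2 lamm : ℝ, (∀ j, j ≠ i1 → j ≠ in' → lamm ≤ μ j ∧ μ j ≤ lam2) →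
      ∀ u : Fin n → ℝ, x1 ⬝ᵥ u = 0 → xn ⬝ᵥ u = 0 →
        lamm * (u ⬝ᵥ u) ≤ (A *ᵥ u) ⬝ᵥ u ∧ (A *ᵥ u) ⬝ᵥ u ≤ lam2 * (u ⬝ᵥ u) := by
    intro lam2 lamm hjb u hu1 hun
    have hdi1 : ecoeff hH u i1 = 0 := by
      have h := ecoeff_dot hH x1 u
      rw [hu1] at h
      have hsum : ∑ j, ecoeff hH x1 j * ecoeff hH u j
          = ecoeff hH x1 i1 * ecoeff hH u i1 :=
        Finset.sum_eq_single i1 (fun j _ hj => by rw [hc1 j hj, zero_mul])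
          (fun h => absurd (Finset.mem_univ i1) h)
      rw [hsum] at h
      rcases mul_eq_zero.mp h.symm with hcase | hcase
      · exact absurd hcase hc1i1
      · exact hcase
    have hdin : ecoeff hH u in' = 0 := by
      have h := ecoeff_dot hH xn u
      rw [hun] at h
      have hsum : ∑ j, ecoeff hH xn j * ecoeff hH u j
          = ecoeff hH xn in' * ecoeff hH u in' :=
        Finset.sum_eq_single in' (fun j _ hj => by rw [hcn j hj, zero_mul])
          (fun h => absurd (Finset.mem_univ in') h)
      rw [hsum] at h
      rcases mul_eq_zero.mp h.symm with hcase | hcase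
      · exact absurd hcase hcnin
      · exact hcase
    have hAu : (A *ᵥ u) ⬝ᵥ u = ∑ j, μ j * (ecoeff hH u j * ecoeff hH u j) := by
      rw [ecoeff_dot hH (A *ᵥ u) u]
      apply Finset.sum_congr rfl
      intro j _
      rw [ecoeff_mulVec hH u j, mul_assoc]
    have huu : u ⬝ᵥ u = ∑ j, ecoeff hH u j * ecoeff hH u j := ecoeff_dot hH u u
    constructor
    · rw [hAu, huu, Finset.mul_sum]
      apply Finset.sum_le_sum
      intro j _
      by_cases h1 : j = i1
      · rw [h1, hdi1]; simp
      by_cases h2 : j = in'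
      · rw [h2, hdin]; simp
      exact mul_le_mul_of_nonneg_right (hjb j h1 h2).1 (mul_self_nonneg _)
    · rw [hAu, huu, Finset.mul_sum]
      apply Finset.sum_le_sum
      intro j _
      by_cases h1 : j = i1
      · rw [h1, hdi1]; simp
      by_cases h2 : j = in'
      · rw [h2, hdin]; simp
      exact mul_le_mul_of_nonneg_right (hjb j h1 h2).2 (mul_self_nonneg _)
  -- construct lam2, lamm
  set S := (Finset.univ.filter (fun j : Fin n => j ≠ i1 ∧ j ≠ in')).image μ with hSdef
  by_cases hS : S.Nonempty
  · refine ⟨S.max' hS, S.min' hS, ?_, ?_, ?_, ?_, ?_⟩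
    · obtain ⟨j, hj, hj2⟩ := Finset.mem_image.mp (S.max'_mem hS)
      rw [← hj2]
      exact lt_of_le_of_ne (hup j) (fun h => (Finset.mem_filter.mp hj).2.1 (huniq1 j h))
    · obtain ⟨j, hj, hj2⟩ := Finset.mem_image.mp (S.min'_mem hS)
      rw [← hj2]
      exact lt_of_le_of_ne (hlo j) (fun h => (Finset.mem_filter.mp hj).2.2 (huniqn j h.symm))
    · obtain ⟨j, hj, hj2⟩ := Finset.mem_image.mp (S.min'_mem hS)
      rw [← hj2]; exact hμpos j
    · obtain ⟨j, hj, hj2⟩ := Finset.mem_image.mp (S.max'_mem hS)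
      rw [← hj2]; exact hμpos j
    · apply key
      intro j h1 h2
      have hjS : μ j ∈ S := Finset.mem_image.mpr ⟨j, by simp [h1, h2], rfl⟩
      exact ⟨S.min'_le _ hjS, S.le_max' _ hjS⟩
  · refine ⟨(lam1 + lamn) / 2, (lam1 + lamn) / 2, by linarith, by linarith, by linarith,
      by linarith, ?_⟩
    apply key
    intro j h1 h2
    have hjS : μ j ∈ S := Finset.mem_image.mpr ⟨j, by simp [h1, h2], rfl⟩
    exact absurd ⟨μ j, hjS⟩ hS

lemma spectrum_eq_range {n : ℕ} {A : Matrix (Fin n) (Fin n) ℝ} (hH : A.IsHermitian) :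
    spectrum ℝ A = Set.range hH.eigenvalues := by
  ext ν
  constructor
  · intro hν
    obtain ⟨v, hv0, hv⟩ := (mem_spectrum_iff_eigen A ν).1 hν
    have hnz : ¬ ∀ j, ecoeff hH v j = 0 := fun h => hv0 ((ecoeff_eq_zero_iff hH v).mp h)
    push_neg at hnz
    obtain ⟨j, hj⟩ := hnz
    have h1 := ecoeff_mulVec hH v j
    rw [hv, ecoeff_smul] at h1
    exact ⟨j, mul_right_cancel₀ hj h1.symm⟩
  · rintro ⟨i, rfl⟩
    exact hH.eigenvalues_mem_spectrum_real i

lemma dot_mulVec_comm {n : ℕ} {M : Matrix (Fin n) (Fin n) ℝ} (h : Mᵀ = M) (u v : Fin n → ℝ) :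
    (M *ᵥ u) ⬝ᵥ v = u ⬝ᵥ (M *ᵥ v) := by
  have h2 : v ᵥ* M = M *ᵥ v := by
    conv_lhs => rw [← h]
    rw [Matrix.vecMul_transpose]
  rw [dotProduct_comm (M *ᵥ u) v, Matrix.dotProduct_mulVec, h2, dotProduct_comm]

lemma dot_eq_sum {n : ℕ} (v w : Fin n → ℝ) : v ⬝ᵥ w = ∑ i, v i * w i := rfl

set_option maxHeartbeats 2000000 in
/-- Nonuniqueness of `κ`-optimal diagonal scaling.  Let `A ≻ 0` with simple largest and
smallest eigenvalues `λ₁ = λ_max(A)`, `λ_n = λ_min(A)` and orthonormal eigenvectors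
`x₁, x_n`.  If `w ≠ 0` satisfies `w ∘ x₁ = w ∘ x_n = 0`, then there is `ε > 0` such that
`κ((I + t Diag(w)) A (I + t Diag(w))) = κ(A)` for all `|t| ≤ ε`. -/
theorem kappa_invariant_under_perturbation (n : ℕ)
    (A : Matrix (Fin n) (Fin n) ℝ) (hA : A.PosDef)
    (lam1 lamn : ℝ) (x1 xn : Fin n → ℝ)
    (hlam1 : lam1 = sSup (spectrum ℝ A)) (hlamn : lamn = sInf (spectrum ℝ A))
    (hx1unit : ∑ i, x1 i * x1 i = 1) (hxnunit : ∑ i, xn i * xn i = 1)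
    (horth : ∑ i, x1 i * xn i = 0)
    (heig1 : A.mulVec x1 = lam1 • x1) (heign : A.mulVec xn = lamn • xn)
    (hsimple1 : A.charpoly.rootMultiplicity lam1 = 1)
    (hsimplen : A.charpoly.rootMultiplicity lamn = 1)
    (w : Fin n → ℝ) (hw : w ≠ 0)
    (hwx1 : ∀ i, w i * x1 i = 0) (hwxn : ∀ i, w i * xn i = 0) :
    ∃ ε > (0 : ℝ), ∀ t : ℝ, |t| ≤ ε →
      sSup (spectrum ℝ ((1 + t • Matrix.diagonal w) * A * (1 + t • Matrix.diagonal w))) /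
        sInf (spectrum ℝ ((1 + t • Matrix.diagonal w) * A * (1 + t • Matrix.diagonal w)))
      = sSup (spectrum ℝ A) / sInf (spectrum ℝ A) := by
  classical
  have hx10 : x1 ≠ 0 := by
    intro h; rw [h] at hx1unit; simp at hx1unit
  have hxn0 : xn ≠ 0 := by
    intro h; rw [h] at hxnunit; simp at hxnunit
  have hcard1 := eigen_card hA.1 lam1 hsimple1
  have hcardn := eigen_card hA.1 lamn hsimplen
  have hspec : spectrum ℝ A = Set.range hA.1.eigenvalues := spectrum_eq_range hA.1
  have hbdda : BddAbove (spectrum ℝ A) := hspec ▸ (Set.finite_range _).bddAbove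
  have hbddb : BddBelow (spectrum ℝ A) := hspec ▸ (Set.finite_range _).bddBelow
  have hup : ∀ i, hA.1.eigenvalues i ≤ lam1 := by
    intro i; rw [hlam1]; exact le_csSup hbdda (hA.1.eigenvalues_mem_spectrum_real i)
  have hlo : ∀ i, lamn ≤ hA.1.eigenvalues i := by
    intro i; rw [hlamn]; exact csInf_le hbddb (hA.1.eigenvalues_mem_spectrum_real i)
  have hne : lam1 ≠ lamn := by
    intro heq
    have hall : ∀ i, hA.1.eigenvalues i = lam1 :=
      fun i => le_antisymm (hup i) (heq ▸ hlo i)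
    have hfil : Finset.univ.filter (fun i => hA.1.eigenvalues i = lam1) = Finset.univ :=
      Finset.filter_true_of_mem (fun i _ => hall i)
    rw [hfil] at hcard1
    have hn : n = 1 := by simpa using hcard1
    subst hn
    rw [Fin.sum_univ_one] at hx1unit hxnunit horth
    rcases mul_eq_zero.mp horth with h | h
    · rw [h] at hx1unit; norm_num at hx1unit
    · rw [h] at hxnunit; norm_num at hxnunit
  obtain ⟨lam2, lamm, hlam2lt, hlammgt, hlammpos, hlam2pos, hgap⟩ :=
    rayleigh_bounds hA hx10 hxn0 hup hlo heig1 heign hcard1 hcardn hne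
  -- lamn ≤ lam1
  obtain ⟨i₀, -⟩ := Finset.card_eq_one.mp hcard1
  have hlamn_le : lamn ≤ lam1 := le_trans (hlo i₀) (hup i₀)
  have hlamn_lt : lamn < lam1 := lt_of_le_of_ne hlamn_le (Ne.symm hne)
  -- the perturbation size
  obtain ⟨K, hKdef⟩ : ∃ K : ℝ, K = ∑ i, |w i| := ⟨_, rfl⟩
  have hK : 0 < K := by
    rw [hKdef]
    obtain ⟨i, hi⟩ := Function.ne_iff.mp hw
    exact Finset.sum_pos' (fun j _ => abs_nonneg (w j))
      ⟨i, Finset.mem_univ i, abs_pos.mpr hi⟩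
  obtain ⟨c, hcdef⟩ : ∃ c : ℝ, c = 2 * K + K ^ 2 := ⟨_, rfl⟩
  have hc : 0 < c := by rw [hcdef]; positivity
  refine ⟨min 1 (min ((lam1 - lam2) / (lam2 * c)) ((lamm - lamn) / (lamm * c))), ?_, ?_⟩
  · apply lt_min
    · norm_num
    · apply lt_min
      · apply div_pos (by linarith) (by positivity)
      · apply div_pos (by linarith) (by positivity)
  intro t ht
  have hs0 : (0:ℝ) ≤ |t| := abs_nonneg t
  have hs1 : |t| ≤ 1 := le_trans ht (min_le_left _ _)
  have hs2 : |t| * (lam2 * c) ≤ lam1 - lam2 := by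
    have h1 : |t| ≤ (lam1 - lam2) / (lam2 * c) :=
      le_trans ht (le_trans (min_le_right _ _) (min_le_left _ _))
    calc |t| * (lam2 * c) ≤ ((lam1 - lam2) / (lam2 * c)) * (lam2 * c) :=
          mul_le_mul_of_nonneg_right h1 (by positivity)
      _ = lam1 - lam2 := by field_simp
  have hs3 : |t| * (lamm * c) ≤ lamm - lamn := by
    have h1 : |t| ≤ (lamm - lamn) / (lamm * c) :=
      le_trans ht (le_trans (min_le_right _ _) (min_le_right _ _))
    calc |t| * (lamm * c) ≤ ((lamm - lamn) / (lamm * c)) * (lamm * c) :=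
          mul_le_mul_of_nonneg_right h1 (by positivity)
      _ = lamm - lamn := by field_simp
  -- matrices
  set D := Matrix.diagonal w with hDdef
  have hDt : Dᵀ = D := Matrix.diagonal_transpose w
  set P := (1 : Matrix (Fin n) (Fin n) ℝ) + t • D with hPdef
  have hPt : Pᵀ = P := by
    rw [hPdef, Matrix.transpose_add, Matrix.transpose_one, Matrix.transpose_smul, hDt]
  have hDx1 : D *ᵥ x1 = 0 := by
    funext i
    rw [hDdef]
    simp [Matrix.mulVec_diagonal, hwx1 i]
  have hDxn : D *ᵥ xn = 0 := by
    funext i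
    rw [hDdef]
    simp [Matrix.mulVec_diagonal, hwxn i]
  have hPx1 : P *ᵥ x1 = x1 := by
    rw [hPdef, Matrix.add_mulVec, Matrix.one_mulVec, Matrix.smul_mulVec, hDx1]
    simp
  have hPxn : P *ᵥ xn = xn := by
    rw [hPdef, Matrix.add_mulVec, Matrix.one_mulVec, Matrix.smul_mulVec, hDxn]
    simp
  set B := P * A * P with hBdef
  clear_value D P B
  have hBmul : ∀ x : Fin n → ℝ, B *ᵥ x = P *ᵥ (A *ᵥ (P *ᵥ x)) := by
    intro x
    rw [hBdef, ← Matrix.mulVec_mulVec, ← Matrix.mulVec_mulVec]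
  have hBx1 : B *ᵥ x1 = lam1 • x1 := by
    rw [hBmul, hPx1, heig1, Matrix.mulVec_smul, hPx1]
  have hBxn : B *ᵥ xn = lamn • xn := by
    rw [hBmul, hPxn, heign, Matrix.mulVec_smul, hPxn]
  have hmem1 : lam1 ∈ spectrum ℝ B := (mem_spectrum_iff_eigen B lam1).2 ⟨x1, hx10, hBx1⟩
  have hmemn : lamn ∈ spectrum ℝ B := (mem_spectrum_iff_eigen B lamn).2 ⟨xn, hxn0, hBxn⟩
  have hAt : Aᵀ = A := by
    rw [← Matrix.conjTranspose_eq_transpose_of_trivial]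
    exact hA.1
  have hquad : ∀ x : Fin n → ℝ,
      lamn * (x ⬝ᵥ x) ≤ (B *ᵥ x) ⬝ᵥ x ∧ (B *ᵥ x) ⬝ᵥ x ≤ lam1 * (x ⬝ᵥ x) := by
    intro x
    have e11 : x1 ⬝ᵥ x1 = 1 := hx1unit
    have enn : xn ⬝ᵥ xn = 1 := hxnunit
    have e1n : x1 ⬝ᵥ xn = 0 := horth
    have en1 : xn ⬝ᵥ x1 = 0 := by rw [dotProduct_comm]; exact e1n
    obtain ⟨a, ha⟩ : ∃ a : ℝ, a = x1 ⬝ᵥ x := ⟨_, rfl⟩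
    obtain ⟨b2, hb2⟩ : ∃ b2 : ℝ, b2 = xn ⬝ᵥ x := ⟨_, rfl⟩
    obtain ⟨z, hz⟩ : ∃ z : Fin n → ℝ, z = x - a • x1 - b2 • xn := ⟨_, rfl⟩
    have hz1 : x1 ⬝ᵥ z = 0 := by
      rw [hz, ha, hb2]
      simp only [dotProduct_sub, dotProduct_smul, smul_eq_mul, e11, e1n]
      ring
    have hzn : xn ⬝ᵥ z = 0 := by
      rw [hz, ha, hb2]
      simp only [dotProduct_sub, dotProduct_smul, smul_eq_mul, en1, enn]
      ring
    have hxsplit : x = a • x1 + b2 • xn + z := by rw [hz]; abel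
    have hz1' : z ⬝ᵥ x1 = 0 := by rw [dotProduct_comm]; exact hz1
    have hzn' : z ⬝ᵥ xn = 0 := by rw [dotProduct_comm]; exact hzn
    have hxx : x ⬝ᵥ x = a*a + b2*b2 + z ⬝ᵥ z := by
      conv_lhs => rw [hxsplit]
      simp only [dotProduct_add, add_dotProduct, dotProduct_smul,
        smul_dotProduct, smul_eq_mul, e11, e1n, en1, enn, hz1, hzn, hz1', hzn']
      ring
    have hz'1 : x1 ⬝ᵥ (P *ᵥ z) = 0 := by
      rw [← dot_mulVec_comm hPt x1 z, hPx1]; exact hz1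
    have hz'n : xn ⬝ᵥ (P *ᵥ z) = 0 := by
      rw [← dot_mulVec_comm hPt xn z, hPxn]; exact hzn
    have hz'1' : (P *ᵥ z) ⬝ᵥ x1 = 0 := by rw [dotProduct_comm]; exact hz'1
    have hz'n' : (P *ᵥ z) ⬝ᵥ xn = 0 := by rw [dotProduct_comm]; exact hz'n
    have hAz'1 : (A *ᵥ (P *ᵥ z)) ⬝ᵥ x1 = 0 := by
      rw [dot_mulVec_comm hAt, heig1, dotProduct_smul, hz'1', smul_zero]
    have hAz'n : (A *ᵥ (P *ᵥ z)) ⬝ᵥ xn = 0 := by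
      rw [dot_mulVec_comm hAt, heign, dotProduct_smul, hz'n', smul_zero]
    have h1Az' : x1 ⬝ᵥ (A *ᵥ (P *ᵥ z)) = 0 := by rw [dotProduct_comm]; exact hAz'1
    have hnAz' : xn ⬝ᵥ (A *ᵥ (P *ᵥ z)) = 0 := by rw [dotProduct_comm]; exact hAz'n
    have hy : P *ᵥ x = a • x1 + b2 • xn + P *ᵥ z := by
      conv_lhs => rw [hxsplit]
      rw [Matrix.mulVec_add, Matrix.mulVec_add, Matrix.mulVec_smul, Matrix.mulVec_smul,
        hPx1, hPxn]
    have hBxx : (B *ᵥ x) ⬝ᵥ x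
        = lam1 * (a*a) + lamn * (b2*b2) + (A *ᵥ (P *ᵥ z)) ⬝ᵥ (P *ᵥ z) := by
      rw [hBmul, dot_mulVec_comm hPt, hy]
      rw [Matrix.mulVec_add, Matrix.mulVec_add, Matrix.mulVec_smul, Matrix.mulVec_smul,
        heig1, heign]
      simp only [dotProduct_add, add_dotProduct, dotProduct_smul,
        smul_dotProduct, smul_eq_mul, e11, e1n, en1, enn, hz'1, hz'n, hz'1', hz'n',
        hAz'1, hAz'n, h1Az', hnAz']
      ring
    -- quantitative bounds
    have hwK : ∀ i, |w i| ≤ K := fun i => by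
      rw [hKdef]; exact Finset.single_le_sum (fun j _ => abs_nonneg (w j)) (Finset.mem_univ i)
    have hDz : ∀ i, (D *ᵥ z) i = w i * z i := fun i => by
      rw [hDdef]; exact Matrix.mulVec_diagonal w z i
    have hq1 : z ⬝ᵥ (D *ᵥ z) = ∑ i, w i * (z i * z i) := by
      rw [dot_eq_sum]
      exact Finset.sum_congr rfl (fun i _ => by rw [hDz i]; ring)
    have hq2 : (D *ᵥ z) ⬝ᵥ (D *ᵥ z) = ∑ i, (w i * z i) * (w i * z i) := by
      rw [dot_eq_sum]
      exact Finset.sum_congr rfl (fun i _ => by rw [hDz i])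
    have hzz0 : 0 ≤ z ⬝ᵥ z := by
      rw [dot_eq_sum]; exact Finset.sum_nonneg fun i _ => mul_self_nonneg _
    have habs : |z ⬝ᵥ (D *ᵥ z)| ≤ K * (z ⬝ᵥ z) := by
      rw [hq1, dot_eq_sum]
      calc |∑ i, w i * (z i * z i)| ≤ ∑ i, |w i * (z i * z i)| :=
            Finset.abs_sum_le_sum_abs _ _
        _ = ∑ i, |w i| * (z i * z i) := Finset.sum_congr rfl (fun i _ => by
              rw [abs_mul, abs_of_nonneg (mul_self_nonneg (z i))])
        _ ≤ ∑ i, K * (z i * z i) := Finset.sum_le_sum (fun i _ =>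
              mul_le_mul_of_nonneg_right (hwK i) (mul_self_nonneg (z i)))
        _ = K * ∑ i, z i * z i := by rw [Finset.mul_sum]
    have hDzz : (D *ᵥ z) ⬝ᵥ (D *ᵥ z) ≤ K^2 * (z ⬝ᵥ z) := by
      rw [hq2, dot_eq_sum, Finset.mul_sum]
      apply Finset.sum_le_sum
      intro i _
      have h2 : (w i)^2 ≤ K^2 := by
        nlinarith only [hwK i, abs_nonneg (w i), le_abs_self (w i), neg_abs_le (w i)]
      calc (w i * z i) * (w i * z i) = (w i)^2 * (z i * z i) := by ring
        _ ≤ K^2 * (z i * z i) := mul_le_mul_of_nonneg_right h2 (mul_self_nonneg _)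
    have hDzz0 : 0 ≤ (D *ᵥ z) ⬝ᵥ (D *ᵥ z) := by
      rw [dot_eq_sum]; exact Finset.sum_nonneg fun i _ => mul_self_nonneg _
    have hz'z' : (P *ᵥ z) ⬝ᵥ (P *ᵥ z)
        = z ⬝ᵥ z + 2*t*(z ⬝ᵥ (D *ᵥ z)) + t^2 * ((D *ᵥ z) ⬝ᵥ (D *ᵥ z)) := by
      have hPz : P *ᵥ z = z + t • (D *ᵥ z) := by
        rw [hPdef, Matrix.add_mulVec, Matrix.one_mulVec, Matrix.smul_mulVec]
      have hcm : (D *ᵥ z) ⬝ᵥ z = z ⬝ᵥ (D *ᵥ z) := dotProduct_comm _ _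
      rw [hPz]
      simp only [dotProduct_add, add_dotProduct, dotProduct_smul,
        smul_dotProduct, smul_eq_mul, hcm]
      ring
    have htmul : |t * (z ⬝ᵥ (D *ᵥ z))| ≤ |t| * (K * (z ⬝ᵥ z)) := by
      rw [abs_mul]; exact mul_le_mul_of_nonneg_left habs hs0
    have htq : t * (z ⬝ᵥ (D *ᵥ z)) ≤ |t| * (K * (z ⬝ᵥ z)) :=
      le_trans (le_abs_self _) htmul
    have htq' : -(|t| * (K * (z ⬝ᵥ z))) ≤ t * (z ⬝ᵥ (D *ᵥ z)) := by
      linarith only [neg_abs_le (t * (z ⬝ᵥ (D *ᵥ z))), htmul]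
    have ht2 : t^2 * ((D *ᵥ z) ⬝ᵥ (D *ᵥ z)) ≤ |t|^2 * (K^2 * (z ⬝ᵥ z)) := by
      rw [sq_abs]; exact mul_le_mul_of_nonneg_left hDzz (sq_nonneg t)
    have ht20 : 0 ≤ t^2 * ((D *ᵥ z) ⬝ᵥ (D *ᵥ z)) := mul_nonneg (sq_nonneg t) hDzz0
    obtain ⟨hgl, hgu⟩ := hgap (P *ᵥ z) hz'1 hz'n
    have hs2' : |t| * (lam2 * (2*K + K^2)) ≤ lam1 - lam2 := by rw [← hcdef]; exact hs2
    have hs3' : |t| * (lamm * (2*K + K^2)) ≤ lamm - lamn := by rw [← hcdef]; exact hs3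
    have hsc1 : lam2 * (1 + 2 * |t| * K + |t| ^ 2 * K ^ 2) ≤ lam1 := by
      nlinarith only [hs2', hs0, hs1, hK.le, hlam2pos.le, mul_nonneg (mul_nonneg hlam2pos.le (sq_nonneg K))
        (mul_nonneg hs0 (sub_nonneg.mpr hs1))]
    have hsc2 : lamn ≤ lamm * (1 - 2 * |t| * K) := by
      nlinarith only [hs3', hs0, hK.le, hlammpos.le, mul_nonneg (mul_nonneg hlammpos.le hs0) (sq_nonneg K)]
    have hQu : (A *ᵥ (P *ᵥ z)) ⬝ᵥ (P *ᵥ z) ≤ lam1 * (z ⬝ᵥ z) := by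
      have h1 : (P *ᵥ z) ⬝ᵥ (P *ᵥ z) ≤ (1 + 2 * |t| * K + |t| ^ 2 * K ^ 2) * (z ⬝ᵥ z) := by
        rw [hz'z']; linarith only [htq, ht2]
      calc (A *ᵥ (P *ᵥ z)) ⬝ᵥ (P *ᵥ z) ≤ lam2 * ((P *ᵥ z) ⬝ᵥ (P *ᵥ z)) := hgu
        _ ≤ lam2 * ((1 + 2 * |t| * K + |t| ^ 2 * K ^ 2) * (z ⬝ᵥ z)) :=
            mul_le_mul_of_nonneg_left h1 hlam2pos.le
        _ = (lam2 * (1 + 2 * |t| * K + |t| ^ 2 * K ^ 2)) * (z ⬝ᵥ z) := by ring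
        _ ≤ lam1 * (z ⬝ᵥ z) := mul_le_mul_of_nonneg_right hsc1 hzz0
    have hQl : lamn * (z ⬝ᵥ z) ≤ (A *ᵥ (P *ᵥ z)) ⬝ᵥ (P *ᵥ z) := by
      have h1 : (1 - 2 * |t| * K) * (z ⬝ᵥ z) ≤ (P *ᵥ z) ⬝ᵥ (P *ᵥ z) := by
        rw [hz'z']; linarith only [htq', ht20]
      calc lamn * (z ⬝ᵥ z) ≤ (lamm * (1 - 2 * |t| * K)) * (z ⬝ᵥ z) :=
            mul_le_mul_of_nonneg_right hsc2 hzz0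
        _ = lamm * ((1 - 2 * |t| * K) * (z ⬝ᵥ z)) := by ring
        _ ≤ lamm * ((P *ᵥ z) ⬝ᵥ (P *ᵥ z)) := mul_le_mul_of_nonneg_left h1 hlammpos.le
        _ ≤ (A *ᵥ (P *ᵥ z)) ⬝ᵥ (P *ᵥ z) := hgl
    constructor
    · rw [hBxx, hxx]
      linarith only [hQl, mul_nonneg (sub_nonneg.mpr hlamn_le) (mul_self_nonneg a)]
    · rw [hBxx, hxx]
      linarith only [hQu, mul_nonneg (sub_nonneg.mpr hlamn_le) (mul_self_nonneg b2)]
  have hsup := sSup_spectrum_eq_of hmem1 (fun x => (hquad x).2)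
  have hinf := sInf_spectrum_eq_of hmemn (fun x => (hquad x).1)
  rw [hsup, hinf, ← hlam1, ← hlamn]
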